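/- If $a_1,\ldots,a_n\in\{-1,1\}$, $c_k=\sum_{j=1}^{n-k}a_ja_{j+k}$, then for each $k=0,1,\ldots,n-1$ one has $a_{k+1}a_{n-k}=(-1)^{n-k-(1+c_k+c_{k+1})/2}$. -/
import Mathlib


open Finset

private lemma pm_sum_prod (s : Finset ℕ) (f : ℕ → ℤ)
    (hf : ∀ j ∈ s, f j = 1 ∨ f j = -1) :
    (∑ j ∈ s, f j = (s.card : ℤ) - 2 * ((s.filter (fun j => f j = -1)).card : ℤ)) ∧
    (∏ j ∈ s, f j = (-1) ^ (s.filter (fun j => f j = -1)).card) := by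
  classical
  induction s using Finset.induction_on with
  | empty => simp
  | @insert x s hx ih =>
    have hfx := hf x (Finset.mem_insert_self x s)
    have ih' := ih (fun j hj => hf j (Finset.mem_insert_of_mem hj))
    have hxs : x ∉ s.filter (fun j => f j = -1) := fun h => hx (Finset.mem_of_mem_filter x h)
    rcases hfx with h1 | h1
    · rw [Finset.sum_insert hx, Finset.prod_insert hx, Finset.filter_insert,
        if_neg (by rw [h1]; norm_num), Finset.card_insert_of_notMem hx]
      constructor
      · rw [h1, ih'.1]; push_cast; ring
      · rw [h1, ih'.2]; ring
    · rw [Finset.sum_insert hx, Finset.prod_insert hx, Finset.filter_insert,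
        if_pos h1, Finset.card_insert_of_notMem hx, Finset.card_insert_of_notMem hxs]
      constructor
      · rw [h1, ih'.1]; push_cast; ring
      · rw [h1, ih'.2]; ring

private lemma telescope (a : ℕ → ℤ) (k : ℕ) : ∀ M : ℕ,
    (∀ j ∈ Icc (k + 1) (k + M + 1), a j * a j = 1) →
    ∏ j ∈ Icc 1 M, (a (j + k) * a (j + k + 1)) = a (k + 1) * a (k + M + 1) := by
  intro M
  induction M with
  | zero =>
    intro h
    simpa using (h (k + 1) (by simp)).symm
  | succ M ih =>
    intro h
    rw [Finset.prod_Icc_succ_top (by omega : 1 ≤ M + 1),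
      ih (fun j hj => h j (by simp at hj ⊢; omega))]
    have h1 := h (k + M + 1) (by simp)
    have e1 : M + 1 + k = k + M + 1 := by omega
    have e2 : k + M + 1 + 1 = k + (M + 1) + 1 := by omega
    rw [e1, e2]
    rw [show k + (M + 1) + 1 = k + M + 2 from by omega]
    linear_combination a (k + 1) * a (k + M + 2) * h1

theorem stmt1 (n : ℕ) (hn : 1 ≤ n) (a : ℕ → ℤ)
    (ha : ∀ j ∈ Icc 1 n, a j = 1 ∨ a j = -1)
    (c : ℕ → ℤ) (hc : ∀ k, c k = ∑ j ∈ Icc 1 (n - k), a j * a (j + k)) :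
    ∀ k ≤ n - 1, a (k + 1) * a (n - k) =
      (-1 : ℤ) ^ (((n : ℤ) - (k : ℤ) - (1 + c k + c (k + 1)) / 2)).toNat := by
  classical
  intro k hk
  set M : ℕ := n - k - 1 with hM
  have hnk : n - k = M + 1 := by omega
  have hnk1 : n - (k + 1) = M := by omega
  have hn' : n = k + M + 1 := by omega
  have hsq : ∀ j ∈ Icc 1 n, a j * a j = 1 := by
    intro j hj
    rcases ha j hj with h | h <;> rw [h] <;> norm_num
  -- values of terms
  have hf0 : ∀ j ∈ Icc 1 (M + 1), a j * a (j + k) = 1 ∨ a j * a (j + k) = -1 := by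
    intro j hj
    simp only [Finset.mem_Icc] at hj
    rcases ha j (by simp; omega) with h | h <;>
      rcases ha (j + k) (by simp; omega) with h' | h' <;>
        rw [h, h'] <;> norm_num
  have hf1 : ∀ j ∈ Icc 1 M, a j * a (j + (k + 1)) = 1 ∨ a j * a (j + (k + 1)) = -1 := by
    intro j hj
    simp only [Finset.mem_Icc] at hj
    rcases ha j (by simp; omega) with h | h <;>
      rcases ha (j + (k + 1)) (by simp; omega) with h' | h' <;>
        rw [h, h'] <;> norm_num
  obtain ⟨hs0, hp0⟩ := pm_sum_prod (Icc 1 (M + 1)) (fun j => a j * a (j + k)) hf0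
  obtain ⟨hs1, hp1⟩ := pm_sum_prod (Icc 1 M) (fun j => a j * a (j + (k + 1))) hf1
  set m0 : ℕ := ((Icc 1 (M + 1)).filter (fun j => a j * a (j + k) = -1)).card with hm0
  set m1 : ℕ := ((Icc 1 M).filter (fun j => a j * a (j + (k + 1)) = -1)).card with hm1
  have hcard0 : (Icc 1 (M + 1)).card = M + 1 := by rw [Nat.card_Icc]; omega
  have hcard1 : (Icc 1 M).card = M := by rw [Nat.card_Icc]; omega
  have hck : c k = (M + 1 : ℤ) - 2 * m0 := by
    rw [hc k, hnk]; rw [hs0, hcard0]; push_cast; ring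
  have hck1 : c (k + 1) = (M : ℤ) - 2 * m1 := by
    rw [hc (k + 1), hnk1]; rw [hs1, hcard1]
  -- exponent
  have hexp : ((n : ℤ) - (k : ℤ) - (1 + c k + c (k + 1)) / 2).toNat = m0 + m1 := by
    rw [hck, hck1]
    have : (1 + ((M + 1 : ℤ) - 2 * m0) + ((M : ℤ) - 2 * m1)) = 2 * ((M : ℤ) + 1 - m0 - m1) := by
      ring
    rw [this, Int.mul_ediv_cancel_left _ (by norm_num)]
    have : (n : ℤ) = (k : ℤ) + M + 1 := by exact_mod_cast congrArg (Nat.cast : ℕ → ℤ) hn'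
    omega
  -- product identity
  have hprod : (∏ j ∈ Icc 1 (M + 1), (a j * a (j + k))) *
      (∏ j ∈ Icc 1 M, (a j * a (j + (k + 1)))) = a (k + 1) * a (n - k) := by
    rw [Finset.prod_Icc_succ_top (by omega : 1 ≤ M + 1), hnk]
    have hcomb : (∏ j ∈ Icc 1 M, (a j * a (j + k))) *
        (∏ j ∈ Icc 1 M, (a j * a (j + (k + 1)))) =
        ∏ j ∈ Icc 1 M, (a (j + k) * a (j + k + 1)) := by
      rw [← Finset.prod_mul_distrib]
      refine Finset.prod_congr rfl ?_
      intro j hj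
      simp only [Finset.mem_Icc] at hj
      have hj2 := hsq j (by simp; omega)
      have : j + (k + 1) = j + k + 1 := by omega
      rw [this]
      linear_combination a (j + k) * a (j + k + 1) * hj2
    have htel : ∏ j ∈ Icc 1 M, (a (j + k) * a (j + k + 1)) = a (k + 1) * a (k + M + 1) := by
      refine telescope a k M ?_
      intro j hj
      simp only [Finset.mem_Icc] at hj
      exact hsq j (by simp; omega)
    calc (∏ j ∈ Icc 1 M, (a j * a (j + k))) * (a (M + 1) * a (M + 1 + k)) *
          (∏ j ∈ Icc 1 M, (a j * a (j + (k + 1))))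
        = ((∏ j ∈ Icc 1 M, (a j * a (j + k))) * (∏ j ∈ Icc 1 M, (a j * a (j + (k + 1))))) *
          (a (M + 1) * a (M + 1 + k)) := by ring
      _ = (a (k + 1) * a (k + M + 1)) * (a (M + 1) * a (M + 1 + k)) := by rw [hcomb, htel]
      _ = a (k + 1) * a (M + 1) := by
          have : M + 1 + k = k + M + 1 := by omega
          rw [this]
          have h1 := hsq (k + M + 1) (by simp; omega)
          linear_combination a (k + 1) * a (M + 1) * h1
  rw [hexp, ← hprod, hp0, hp1, pow_add]
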